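/- Consider the planar ODE ẋ = x(1−x)(3y−2), ẏ = y(1−y)(3x−2) on (0,1)². For every solution (x(t), y(t)) : [0,∞) → (0,1)² whose initial condition satisfies y(0) = (1/2)(1 − x(0) + √(1 + 2x(0) − 3x(0)²)), we have (x(t), y(t)) → (2/3, 2/3) as t → ∞; that is, the curve {(x, (1/2)(1 − x + √(1 + 2x − 3x²))) : x ∈ (0,1)} is contained in the stable manifold of the fully mixed equilibrium (2/3, 2/3). -/

import Mathlib

open Filter Topology Set

/-- Grönwall-type lemma: a scalar function with `|f'| ≤ 4|f|` on `[a,∞)`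
and `f a = 0` vanishes identically on `[a,∞)`. -/
lemma stagHunt_gronZero (f f' : ℝ → ℝ) (a : ℝ) (hd : ∀ t, a ≤ t → HasDerivAt f (f' t) t)
    (hb : ∀ t, a ≤ t → |f' t| ≤ 4 * |f t|) (h0 : f a = 0) : ∀ t, a ≤ t → f t = 0 := by
  intro b hab
  have hcont : ContinuousOn f (Icc a b) := fun s hs =>
    ((hd s hs.1).continuousAt).continuousWithinAt
  have H := norm_le_gronwallBound_of_norm_deriv_right_le (δ := 0) (K := 4) (ε := 0) hcont
    (fun s hs => (hd s hs.1).hasDerivWithinAt)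
    (by simp [h0])
    (fun s hs => by simpa [Real.norm_eq_abs] using hb s hs.1)
    b (right_mem_Icc.mpr hab)
  rw [gronwallBound_ε0_δ0] at H
  simpa [Real.norm_eq_abs, abs_nonpos_iff] using H

/-- A continuous function on `[0,∞)` that never takes the value `c` and starts below `c`
stays below `c`. -/
lemma stagHunt_signLt (f : ℝ → ℝ) (c : ℝ) (hc : ContinuousOn f (Ici 0))
    (hne : ∀ t, 0 ≤ t → f t ≠ c) (h0 : f 0 < c) : ∀ t, 0 ≤ t → f t < c := by
  intro t ht
  rcases lt_or_ge (f t) c with h | h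
  · exact h
  · obtain ⟨s, hs, hfs⟩ := intermediate_value_Icc ht (hc.mono Icc_subset_Ici_self) ⟨h0.le, h⟩
    exact absurd hfs (hne s hs.1)

/-- A continuous function on `[0,∞)` that never takes the value `c` and starts above `c`
stays above `c`. -/
lemma stagHunt_signGt (f : ℝ → ℝ) (c : ℝ) (hc : ContinuousOn f (Ici 0))
    (hne : ∀ t, 0 ≤ t → f t ≠ c) (h0 : c < f 0) : ∀ t, 0 ≤ t → c < f t := by
  intro t ht
  rcases lt_or_ge c (f t) with h | h
  · exact h
  · obtain ⟨s, hs, hfs⟩ := intermediate_value_Icc' ht (hc.mono Icc_subset_Ici_self) ⟨h, h0.le⟩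
    exact absurd hfs (hne s hs.1)


/-- Pointwise bound used for the Grönwall argument near the equilibrium. -/
lemma stagHunt_uBound (a b : ℝ) (ha0 : 0 < a) (ha1 : a < 1) (hb0 : 0 < b) (hb1 : b < 1) :
    |2 * (a - 2/3) * (a * (1 - a) * (3 * b - 2)) +
      2 * (b - 2/3) * (b * (1 - b) * (3 * a - 2))| ≤
      4 * |(a - 2/3)^2 + (b - 2/3)^2| := by
  have hu : |(a - 2/3)^2 + (b - 2/3)^2| = (a - 2/3)^2 + (b - 2/3)^2 :=
    abs_of_nonneg (by positivity)
  rw [hu]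
  have hP0 : (0:ℝ) ≤ a * (1 - a) + b * (1 - b) := by nlinarith
  have hP1 : a * (1 - a) + b * (1 - b) ≤ 1/2 := by
    nlinarith [sq_nonneg (a - 1/2), sq_nonneg (b - 1/2)]
  rw [abs_le]
  constructor
  · nlinarith [mul_nonneg (sq_nonneg (a + b - 4/3)) hP0,
      mul_nonneg (sq_nonneg (a - b)) hP0,
      mul_nonneg (sq_nonneg (a + b - 4/3)) (by linarith : (0:ℝ) ≤ 1/2 - (a * (1 - a) + b * (1 - b))),
      mul_nonneg (sq_nonneg (a - b)) (by linarith : (0:ℝ) ≤ 1/2 - (a * (1 - a) + b * (1 - b))),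
      sq_nonneg (a - 2/3), sq_nonneg (b - 2/3), sq_nonneg (a - b), sq_nonneg (a + b - 4/3)]
  · nlinarith [mul_nonneg (sq_nonneg (a + b - 4/3)) hP0,
      mul_nonneg (sq_nonneg (a - b)) hP0,
      mul_nonneg (sq_nonneg (a + b - 4/3)) (by linarith : (0:ℝ) ≤ 1/2 - (a * (1 - a) + b * (1 - b))),
      mul_nonneg (sq_nonneg (a - b)) (by linarith : (0:ℝ) ≤ 1/2 - (a * (1 - a) + b * (1 - b))),
      sq_nonneg (a - 2/3), sq_nonneg (b - 2/3), sq_nonneg (a - b), sq_nonneg (a + b - 4/3)]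

/-- Pointwise bound used for the Grönwall argument for the conserved quantity. -/
lemma stagHunt_WBound (a b : ℝ) (ha0 : 0 < a) (ha1 : a < 1) (hb0 : 0 < b) (hb1 : b < 1) :
    |(-((3 * a - 2) * (3 * b - 2)) * (a^2 * (1 - a) - b^2 * (1 - b)))| ≤
      4 * |a^2 * (1 - a) - b^2 * (1 - b)| := by
  rw [abs_mul, abs_neg, abs_mul]
  have h1 : |3 * a - 2| ≤ 2 := abs_le.mpr ⟨by linarith, by linarith⟩
  have h2 : |3 * b - 2| ≤ 2 := abs_le.mpr ⟨by linarith, by linarith⟩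
  have h3 : |3 * a - 2| * |3 * b - 2| ≤ 4 := by
    nlinarith [abs_nonneg (3 * a - 2), abs_nonneg (3 * b - 2)]
  exact mul_le_mul_of_nonneg_right h3 (abs_nonneg _)

/-- Core convergence: if the solution stays in the region `x < 2/3 < y`,
then it converges to the mixed equilibrium. -/
lemma stagHunt_core (x y : ℝ → ℝ)
    (hmem : ∀ t : ℝ, 0 ≤ t → x t ∈ Ioo (0:ℝ) 1 ∧ y t ∈ Ioo (0:ℝ) 1)
    (hx : ∀ t : ℝ, 0 ≤ t → HasDerivAt x (x t * (1 - x t) * (3 * y t - 2)) t)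
    (hy : ∀ t : ℝ, 0 ≤ t → HasDerivAt y (y t * (1 - y t) * (3 * x t - 2)) t)
    (hxlt : ∀ t, 0 ≤ t → x t < 2/3) (hygt : ∀ t, 0 ≤ t → 2/3 < y t) :
    Tendsto (fun t => (x t, y t)) atTop (𝓝 ((2/3 : ℝ), (2/3 : ℝ))) := by
  have hxc : ContinuousOn x (Ici 0) := fun t ht => ((hx t ht).continuousAt).continuousWithinAt
  have hyc : ContinuousOn y (Ici 0) := fun t ht => ((hy t ht).continuousAt).continuousWithinAt
  -- x is monotone, y antitone on [0,∞)
  have hxmono : MonotoneOn x (Ici 0) := by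
    apply monotoneOn_of_deriv_nonneg (convex_Ici 0) hxc
    · intro t ht
      rw [interior_Ici] at ht
      exact ((hx t ht.le).differentiableAt).differentiableWithinAt
    · intro t ht
      rw [interior_Ici] at ht
      rw [(hx t ht.le).deriv]
      have h1 := (hmem t ht.le).1.1
      have h2 := (hmem t ht.le).1.2
      have h3 := hygt t ht.le
      have : (0:ℝ) ≤ x t * (1 - x t) := mul_nonneg h1.le (by linarith)
      nlinarith
  have hymono : AntitoneOn y (Ici 0) := by
    apply antitoneOn_of_deriv_nonpos (convex_Ici 0) hyc
    · intro t ht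
      rw [interior_Ici] at ht
      exact ((hy t ht.le).differentiableAt).differentiableWithinAt
    · intro t ht
      rw [interior_Ici] at ht
      rw [(hy t ht.le).deriv]
      have h1 := (hmem t ht.le).2.1
      have h2 := (hmem t ht.le).2.2
      have h3 := hxlt t ht.le
      have : (0:ℝ) ≤ y t * (1 - y t) := mul_nonneg h1.le (by linarith)
      nlinarith
  -- limits
  set X : ℝ → ℝ := fun t => x (max t 0) with hX
  set Y : ℝ → ℝ := fun t => y (max t 0) with hY
  have hXm : Monotone X := fun a b hab =>
    hxmono (Set.mem_Ici.mpr (le_max_right a 0)) (Set.mem_Ici.mpr (le_max_right b 0)) (max_le_max hab le_rfl)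
  have hYm : Antitone Y := fun a b hab =>
    hymono (Set.mem_Ici.mpr (le_max_right a 0)) (Set.mem_Ici.mpr (le_max_right b 0)) (max_le_max hab le_rfl)
  have hXbdd : BddAbove (range X) := by
    refine ⟨2/3, ?_⟩; rintro _ ⟨t, rfl⟩; exact (hxlt _ (le_max_right t 0)).le
  have hYbdd : BddBelow (range Y) := by
    refine ⟨2/3, ?_⟩; rintro _ ⟨t, rfl⟩; exact (hygt _ (le_max_right t 0)).le
  set L : ℝ := ⨆ t, X t with hLdef
  set M : ℝ := ⨅ t, Y t with hMdef
  have hXlim : Tendsto X atTop (𝓝 L) := tendsto_atTop_ciSup hXm hXbdd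
  have hYlim : Tendsto Y atTop (𝓝 M) := tendsto_atTop_ciInf hYm hYbdd
  have hxX : x =ᶠ[atTop] X := by
    filter_upwards [eventually_ge_atTop (0:ℝ)] with t ht
    simp [hX, max_eq_left ht]
  have hyY : y =ᶠ[atTop] Y := by
    filter_upwards [eventually_ge_atTop (0:ℝ)] with t ht
    simp [hY, max_eq_left ht]
  have hxlim : Tendsto x atTop (𝓝 L) := hXlim.congr' hxX.symm
  have hylim : Tendsto y atTop (𝓝 M) := hYlim.congr' hyY.symm
  have hxleL : ∀ t, 0 ≤ t → x t ≤ L := by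
    intro t ht
    have := le_ciSup hXbdd t
    simpa [hX, max_eq_left ht] using this
  have hMley : ∀ t, 0 ≤ t → M ≤ y t := by
    intro t ht
    have := ciInf_le hYbdd t
    simpa [hY, max_eq_left ht] using this
  have hLle : L ≤ 2/3 := ciSup_le fun t => (hxlt _ (le_max_right t 0)).le
  have hMge : (2/3:ℝ) ≤ M := le_ciInf fun t => (hygt _ (le_max_right t 0)).le
  have hyley0 : ∀ t, 0 ≤ t → y t ≤ y 0 := fun t ht => hymono self_mem_Ici ht ht
  have hx0lex : ∀ t, 0 ≤ t → x 0 ≤ x t := fun t ht => hxmono self_mem_Ici ht ht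
  -- M = 2/3 (otherwise x grows linearly, contradiction with x < 1)
  have hM : M = 2/3 := by
    by_contra hne
    have hM' : 2/3 < M := lt_of_le_of_ne hMge (Ne.symm hne)
    have hx00 := (hmem 0 le_rfl).1.1
    set δ : ℝ := x 0 * (M - 2/3) with hδdef
    have hδ : 0 < δ := mul_pos hx00 (by linarith)
    have hgrow : MonotoneOn (fun t => x t - δ * t) (Ici 0) := by
      apply monotoneOn_of_deriv_nonneg (convex_Ici 0)
      · exact hxc.sub ((continuous_const.mul continuous_id).continuousOn)
      · intro t ht
        rw [interior_Ici] at ht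
        exact (((hx t ht.le).differentiableAt).sub
          ((differentiable_const δ).mul differentiable_id).differentiableAt).differentiableWithinAt
      · intro t ht
        rw [interior_Ici] at ht
        have hlin : HasDerivAt (fun s : ℝ => δ * s) δ t := by
          simpa using (hasDerivAt_id t).const_mul δ
        have hd : HasDerivAt (fun t => x t - δ * t) (x t * (1 - x t) * (3 * y t - 2) - δ) t :=
          (hx t ht.le).sub hlin
        rw [hd.deriv]
        have h1 := hx0lex t ht.le
        have h2 := hxlt t ht.le
        have h3 := hMley t ht.le
        have h4 := (hmem t ht.le).1.1
        have k1 : x 0 * (1/3:ℝ) ≤ x t * (1 - x t) :=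
          mul_le_mul h1 (by linarith) (by norm_num) h4.le
        have k2 : (x 0 * (1/3:ℝ)) * (3*M - 2) ≤ (x t * (1 - x t)) * (3 * y t - 2) :=
          mul_le_mul k1 (by linarith) (by linarith) (mul_nonneg h4.le (by linarith))
        have k3 : x 0 * (1/3:ℝ) * (3*M - 2) = δ := by rw [hδdef]; ring
        linarith
    have hb : (0:ℝ) ≤ (1 - x 0) / δ := div_nonneg (by have := (hmem 0 le_rfl).1.2; linarith) hδ.le
    have := hgrow self_mem_Ici hb hb
    have hxb := (hmem _ hb).1.2
    have : x ((1 - x 0)/δ) - δ * ((1 - x 0)/δ) ≥ x 0 - δ * 0 := by simpa using this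
    rw [mul_div_cancel₀ _ hδ.ne'] at this
    linarith
  -- L = 2/3 (otherwise y decays linearly, contradiction with y > 0)
  have hL : L = 2/3 := by
    by_contra hne
    have hL' : L < 2/3 := lt_of_le_of_ne hLle hne
    have hy00 := (hmem 0 le_rfl).2.2
    set δ : ℝ := 2 * (1 - y 0) * (2/3 - L) with hδdef
    have hδ : 0 < δ := by
      apply mul_pos (mul_pos two_pos (by linarith)) (by linarith)
    have hdecay : AntitoneOn (fun t => y t + δ * t) (Ici 0) := by
      apply antitoneOn_of_deriv_nonpos (convex_Ici 0)
      · exact hyc.add ((continuous_const.mul continuous_id).continuousOn)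
      · intro t ht
        rw [interior_Ici] at ht
        exact (((hy t ht.le).differentiableAt).add
          ((differentiable_const δ).mul differentiable_id).differentiableAt).differentiableWithinAt
      · intro t ht
        rw [interior_Ici] at ht
        have hlin : HasDerivAt (fun s : ℝ => δ * s) δ t := by
          simpa using (hasDerivAt_id t).const_mul δ
        have hd : HasDerivAt (fun t => y t + δ * t) (y t * (1 - y t) * (3 * x t - 2) + δ) t :=
          (hy t ht.le).add hlin
        rw [hd.deriv]
        have h1 := hyley0 t ht.le
        have h2 := hygt t ht.le
        have h3 := hxleL t ht.le
        have h4 := hxlt t ht.le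
        have h5 := (hmem t ht.le).2.2
        have k1 : (2/3:ℝ) * (1 - y 0) ≤ y t * (1 - y t) :=
          mul_le_mul h2.le (by linarith) (by linarith) (by linarith)
        have k2 : y t * (1 - y t) * (3 * x t - 2) ≤ (2/3:ℝ) * (1 - y 0) * (3 * x t - 2) :=
          mul_le_mul_of_nonpos_right k1 (by linarith)
        have k3 : (2/3:ℝ) * (1 - y 0) * (3 * x t - 2) ≤ (2/3:ℝ) * (1 - y 0) * (3 * L - 2) :=
          mul_le_mul_of_nonneg_left (by linarith) (by nlinarith)
        have k4 : (2/3:ℝ) * (1 - y 0) * (3 * L - 2) = -δ := by rw [hδdef]; ring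
        linarith
    have hb : (0:ℝ) ≤ y 0 / δ := div_nonneg (by have := (hmem 0 le_rfl).2.1; linarith) hδ.le
    have := hdecay self_mem_Ici hb hb
    have hyb := (hmem _ hb).2.1
    have : y (y 0 / δ) + δ * (y 0 / δ) ≤ y 0 + δ * 0 := by simpa using this
    rw [mul_div_cancel₀ _ hδ.ne'] at this
    linarith
  rw [hL] at hxlim
  rw [hM] at hylim
  exact hxlim.prodMk_nhds hylim

set_option maxHeartbeats 1000000 in
/-- **Stag Hunt, stable manifold of the mixed equilibrium.**
For the projected replicator dynamics of the Stag Hunt game,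
`ẋ = x(1-x)(3y-2)`, `ẏ = y(1-y)(3x-2)` on `(0,1)²`, every solution whose initial
condition lies on the curve `y = (1/2)(1 - x + √(1 + 2x - 3x²))` converges to the
fully mixed equilibrium `(2/3, 2/3)`; i.e. this curve is contained in the stable
manifold of `(2/3, 2/3)`. -/
theorem stagHunt_on_curve_tendsto_mixed
    (x y : ℝ → ℝ)
    (hmem : ∀ t : ℝ, 0 ≤ t → x t ∈ Ioo (0:ℝ) 1 ∧ y t ∈ Ioo (0:ℝ) 1)
    (hx : ∀ t : ℝ, 0 ≤ t →
      HasDerivAt x (x t * (1 - x t) * (3 * y t - 2)) t)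
    (hy : ∀ t : ℝ, 0 ≤ t →
      HasDerivAt y (y t * (1 - y t) * (3 * x t - 2)) t)
    (h0 : y 0 = (1/2) * (1 - x 0 + Real.sqrt (1 + 2 * x 0 - 3 * (x 0)^2))) :
    Tendsto (fun t => (x t, y t)) atTop (𝓝 ((2/3 : ℝ), (2/3 : ℝ))) := by
  by_cases heq : ∃ T, 0 ≤ T ∧ x T = 2/3 ∧ y T = 2/3
  · -- the solution reaches the equilibrium; by Grönwall it stays there
    obtain ⟨T, hT, hxT, hyT⟩ := heq
    have hu0 : ∀ t, T ≤ t → (x t - 2/3)^2 + (y t - 2/3)^2 = 0 := by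
      apply stagHunt_gronZero _
        (fun t => 2 * (x t - 2/3) * (x t * (1 - x t) * (3 * y t - 2)) +
          2 * (y t - 2/3) * (y t * (1 - y t) * (3 * x t - 2))) T
      · intro t ht
        have ht0 : 0 ≤ t := hT.trans ht
        have H := (((hx t ht0).sub_const (2/3)).fun_pow 2).fun_add (((hy t ht0).sub_const (2/3)).fun_pow 2)
        refine H.congr_deriv ?_
        push_cast
        ring
      · intro t ht
        obtain ⟨⟨hx0, hx1⟩, ⟨hy0, hy1⟩⟩ := hmem t (hT.trans ht)
        exact stagHunt_uBound (x t) (y t) hx0 hx1 hy0 hy1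
      · rw [hxT, hyT]; norm_num
    have hconst : ∀ t, T ≤ t → x t = 2/3 ∧ y t = 2/3 := by
      intro t ht
      have h := hu0 t ht
      have h1 : (x t - 2/3)^2 = 0 := by nlinarith [sq_nonneg (x t - 2/3), sq_nonneg (y t - 2/3)]
      have h2 : (y t - 2/3)^2 = 0 := by nlinarith [sq_nonneg (x t - 2/3), sq_nonneg (y t - 2/3)]
      constructor
      · have := pow_eq_zero_iff (n := 2) (by norm_num) |>.mp h1; linarith
      · have := pow_eq_zero_iff (n := 2) (by norm_num) |>.mp h2; linarith
    have hev : (fun _ : ℝ => ((2/3 : ℝ), (2/3 : ℝ))) =ᶠ[atTop] fun t => (x t, y t) := by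
      filter_upwards [eventually_ge_atTop T] with t ht
      rw [(hconst t ht).1, (hconst t ht).2]
    exact tendsto_const_nhds.congr' hev
  · -- the solution never touches the equilibrium
    have hxc : ContinuousOn x (Ici 0) := fun t ht => ((hx t ht).continuousAt).continuousWithinAt
    have hyc : ContinuousOn y (Ici 0) := fun t ht => ((hy t ht).continuousAt).continuousWithinAt
    -- the conserved quantity W = x²(1-x) - y²(1-y) vanishes along the solution
    have hW : ∀ t, 0 ≤ t → (x t)^2 * (1 - x t) = (y t)^2 * (1 - y t) := by
      have h := stagHunt_gronZero (fun s => (x s)^2 * (1 - x s) - (y s)^2 * (1 - y s))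
        (fun t => -((3 * x t - 2) * (3 * y t - 2)) *
          ((x t)^2 * (1 - x t) - (y t)^2 * (1 - y t))) 0
        (by
          intro t ht
          have Hx := hx t ht
          have Hy := hy t ht
          have H := (((Hx.fun_pow 2).fun_mul ((hasDerivAt_const t (1:ℝ)).fun_sub Hx))).fun_sub
            (((Hy.fun_pow 2).fun_mul ((hasDerivAt_const t (1:ℝ)).fun_sub Hy)))
          refine H.congr_deriv ?_
          push_cast
          ring)
        (by
          intro t ht
          obtain ⟨⟨hx0, hx1⟩, ⟨hy0, hy1⟩⟩ := hmem t ht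
          exact stagHunt_WBound (x t) (y t) hx0 hx1 hy0 hy1)
        (by
          have h01 := (hmem 0 le_rfl).1
          set s := Real.sqrt (1 + 2 * x 0 - 3 * (x 0)^2) with hs
          have hA : (0:ℝ) ≤ 1 + 2 * x 0 - 3 * (x 0)^2 := by nlinarith [h01.1, h01.2]
          have hs2 : s^2 = 1 + 2 * x 0 - 3 * (x 0)^2 := Real.sq_sqrt hA
          show (x 0)^2 * (1 - x 0) - (y 0)^2 * (1 - y 0) = 0
          rw [h0]
          linear_combination ((1 - 3 * (x 0) + s)/8) * hs2)
      intro t ht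
      have h' : (x t)^2 * (1 - x t) - (y t)^2 * (1 - y t) = 0 := h t ht
      linarith
    -- the solution never crosses the lines x = 2/3 or y = 2/3
    have hxne : ∀ t, 0 ≤ t → x t ≠ 2/3 := by
      intro t ht h
      have hy01 := (hmem t ht).2
      have hWt := hW t ht
      rw [h] at hWt
      have h3 : (y t - 2/3)^2 * (y t + 1/3) = 0 := by linear_combination hWt
      have hy23 : y t = 2/3 := by
        rcases mul_eq_zero.mp h3 with h4 | h4
        · have := pow_eq_zero_iff (n := 2) (by norm_num) |>.mp h4; linarith
        · linarith [hy01.1]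
      exact heq ⟨t, ht, h, hy23⟩
    have hyne : ∀ t, 0 ≤ t → y t ≠ 2/3 := by
      intro t ht h
      have hx01 := (hmem t ht).1
      have hWt := hW t ht
      rw [h] at hWt
      have h3 : (x t - 2/3)^2 * (x t + 1/3) = 0 := by linear_combination -hWt
      have hx23 : x t = 2/3 := by
        rcases mul_eq_zero.mp h3 with h4 | h4
        · have := pow_eq_zero_iff (n := 2) (by norm_num) |>.mp h4; linarith
        · linarith [hx01.1]
      exact heq ⟨t, ht, hx23, h⟩
    rcases lt_or_gt_of_ne (hxne 0 le_rfl) with hlt | hgt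
    · -- x 0 < 2/3, hence y 0 > 2/3 on the curve
      have hy0gt : 2/3 < y 0 := by
        have h01 := (hmem 0 le_rfl).1
        set s := Real.sqrt (1 + 2 * x 0 - 3 * (x 0)^2) with hs
        have hA : (0:ℝ) ≤ 1 + 2 * x 0 - 3 * (x 0)^2 := by nlinarith [h01.1, h01.2]
        have hs2 : s^2 = 1 + 2 * x 0 - 3 * (x 0)^2 := Real.sq_sqrt hA
        have hsn : 0 ≤ s := Real.sqrt_nonneg _
        have : 1/3 + x 0 < s := by nlinarith [h01.1]
        rw [h0]; linarith
      exact stagHunt_core x y hmem hx hy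
        (stagHunt_signLt x (2/3) hxc hxne hlt)
        (stagHunt_signGt y (2/3) hyc hyne hy0gt)
    · -- x 0 > 2/3, hence y 0 < 2/3; apply the core lemma to the swapped system
      have hy0lt : y 0 < 2/3 := by
        have h01 := (hmem 0 le_rfl).1
        set s := Real.sqrt (1 + 2 * x 0 - 3 * (x 0)^2) with hs
        have hA : (0:ℝ) ≤ 1 + 2 * x 0 - 3 * (x 0)^2 := by nlinarith [h01.1, h01.2]
        have hs2 : s^2 = 1 + 2 * x 0 - 3 * (x 0)^2 := Real.sq_sqrt hA
        have hsn : 0 ≤ s := Real.sqrt_nonneg _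
        have : s < 1/3 + x 0 := by nlinarith [h01.2]
        rw [h0]; linarith
      have H := stagHunt_core y x (fun t ht => ⟨(hmem t ht).2, (hmem t ht).1⟩) hy hx
        (stagHunt_signLt y (2/3) hyc hyne hy0lt)
        (stagHunt_signGt x (2/3) hxc hxne hgt)
      have := (Continuous.tendsto continuous_swap ((2/3 : ℝ), (2/3 : ℝ))).comp H
      simpa [Function.comp_def] using this
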